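/- arXiv:2206.09204 — 2 statements merged into one kernel-verified Lean document; each statement's English description precedes it below -/
import Mathlib

section
/- There exist absolute constants c₁, c₂ > 0 such that for every integer τ ≥ 1, c₁ · τ^{−1/2} ≤ Σ_{k=τ}^{∞} c_k ≤ c₂ · τ^{−1/2}. -/
noncomputable def arcsinCoeff (k : ℕ) : ℝ :=
  (Nat.factorial (2 * k) : ℝ) / (4 ^ k * (Nat.factorial k : ℝ) ^ 2 * (2 * k + 1))

noncomputable def qRatio (k : ℕ) : ℝ :=
  (Nat.factorial (2 * k) : ℝ) / (4 ^ k * (Nat.factorial k : ℝ) ^ 2)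

lemma qRatio_pos (k : ℕ) : 0 < qRatio k := by
  unfold qRatio
  positivity

lemma arcsinCoeff_eq (k : ℕ) : arcsinCoeff k = qRatio k / (2 * k + 1) := by
  unfold arcsinCoeff qRatio
  rw [div_div]

lemma qRatio_succ (k : ℕ) : qRatio (k + 1) = qRatio k * (2 * k + 1) / (2 * k + 2) := by
  have e1 : (Nat.factorial (2 * (k + 1)) : ℝ)
      = (2 * k + 2) * ((2 * k + 1) * Nat.factorial (2 * k)) := by
    rw [show 2 * (k + 1) = 2 * k + 1 + 1 by ring, Nat.factorial_succ, Nat.factorial_succ]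
    push_cast; ring
  have e2 : (Nat.factorial (k + 1) : ℝ) = (k + 1) * Nat.factorial k := by
    rw [Nat.factorial_succ]; push_cast; ring
  unfold qRatio
  rw [e1, e2]
  have hf : (Nat.factorial k : ℝ) ≠ 0 := by positivity
  have h4 : (4 : ℝ) ^ k ≠ 0 := by positivity
  field_simp
  ring

lemma qRatio_sq_lb (k : ℕ) (hk : 1 ≤ k) : 1 ≤ 4 * (qRatio k) ^ 2 * k := by
  induction k with
  | zero => omega
  | succ n ih =>
    rcases Nat.eq_or_lt_of_le hk with h | h
    · have : n = 0 := by omega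
      subst this
      have : qRatio 1 = 1 / 2 := by
        rw [qRatio_succ]
        unfold qRatio
        norm_num [Nat.factorial]
      rw [this]; norm_num
    · have hn : 1 ≤ n := by omega
      have ihn := ih hn
      have hq := qRatio_pos n
      have hn1 : (1 : ℝ) ≤ n := by exact_mod_cast hn
      rw [qRatio_succ, div_pow, mul_pow]
      have hd : (0 : ℝ) < ((2 : ℝ) * n + 2) ^ 2 := by positivity
      have hrw : 4 * (qRatio n ^ 2 * ((2 : ℝ) * n + 1) ^ 2 / ((2 : ℝ) * n + 2) ^ 2) * ((n : ℕ) + 1 : ℕ)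
          = (4 * qRatio n ^ 2 * ((2 : ℝ) * n + 1) ^ 2 * ((n : ℝ) + 1)) / ((2 : ℝ) * n + 2) ^ 2 := by
        push_cast; ring
      rw [hrw, le_div_iff₀ hd]
      nlinarith [sq_nonneg (qRatio n)]

lemma qRatio_sq_ub (k : ℕ) : (qRatio k) ^ 2 * (2 * k + 1) ≤ 2 := by
  induction k with
  | zero =>
    have : qRatio 0 = 1 := by unfold qRatio; norm_num [Nat.factorial]
    rw [this]; norm_num
  | succ n ih =>
    have hq := qRatio_pos n
    rw [qRatio_succ, div_pow, mul_pow]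
    have hd : (0 : ℝ) < ((2 : ℝ) * n + 2) ^ 2 := by positivity
    rw [div_mul_eq_mul_div, div_le_iff₀ hd]
    push_cast
    nlinarith [sq_nonneg (qRatio n)]

lemma qRatio_le (n : ℕ) (hn : 1 ≤ n) : qRatio n * Real.sqrt n ≤ 1 := by
  have hs : (0 : ℝ) ≤ Real.sqrt n := Real.sqrt_nonneg _
  have hs2 : (Real.sqrt n) ^ 2 = n := Real.sq_sqrt (by positivity)
  have hub := qRatio_sq_ub n
  have hq := qRatio_pos n
  have hn1 : (1 : ℝ) ≤ n := by exact_mod_cast hn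
  have heq : (qRatio n * Real.sqrt n) ^ 2 = qRatio n ^ 2 * n := by
    rw [mul_pow, hs2]
  have hle1 : (qRatio n * Real.sqrt n) ^ 2 ≤ 1 := by
    rw [heq]; nlinarith [sq_nonneg (qRatio n)]
  nlinarith [mul_nonneg hq.le hs]

lemma qRatio_ge (n : ℕ) (hn : 1 ≤ n) : 1 ≤ 2 * qRatio n * Real.sqrt n := by
  have hs : (0 : ℝ) ≤ Real.sqrt n := Real.sqrt_nonneg _
  have hs2 : (Real.sqrt n) ^ 2 = n := Real.sq_sqrt (by positivity)
  have hlb := qRatio_sq_lb n hn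
  have hq := qRatio_pos n
  have heq : (2 * qRatio n * Real.sqrt n) ^ 2 = 4 * qRatio n ^ 2 * n := by
    rw [mul_pow, mul_pow, hs2]; ring
  have hge1 : 1 ≤ (2 * qRatio n * Real.sqrt n) ^ 2 := by rw [heq]; exact hlb
  nlinarith [mul_nonneg (mul_nonneg (by norm_num : (0:ℝ) ≤ 2) hq.le) hs]

lemma sqrt_inv_sub (n : ℕ) (hn : 1 ≤ n) :
    (Real.sqrt n)⁻¹ - (Real.sqrt ((n : ℝ) + 1))⁻¹ =
      (Real.sqrt n * Real.sqrt ((n : ℝ) + 1) * (Real.sqrt n + Real.sqrt ((n : ℝ) + 1)))⁻¹ := by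
  set s := Real.sqrt n with hsdef
  set t := Real.sqrt ((n : ℝ) + 1) with htdef
  have hn1 : (1 : ℝ) ≤ n := by exact_mod_cast hn
  have hs : 0 < s := Real.sqrt_pos.mpr (by linarith)
  have ht : 0 < t := Real.sqrt_pos.mpr (by linarith)
  have hs2 : s ^ 2 = n := Real.sq_sqrt (by linarith)
  have ht2 : t ^ 2 = (n : ℝ) + 1 := Real.sq_sqrt (by linarith)
  have hst : 0 < s + t := by linarith
  have key : (t - s) * (t + s) = 1 := by linear_combination ht2 - hs2
  field_simp
  linear_combination key

lemma arcsinCoeff_bounds (n : ℕ) (hn : 1 ≤ n) :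
    (1 / 3 : ℝ) * ((Real.sqrt n)⁻¹ - (Real.sqrt ((n : ℝ) + 1))⁻¹) ≤ arcsinCoeff n ∧
    arcsinCoeff n ≤ 6 * ((Real.sqrt n)⁻¹ - (Real.sqrt ((n : ℝ) + 1))⁻¹) := by
  rw [sqrt_inv_sub n hn, arcsinCoeff_eq]
  set s := Real.sqrt n with hsdef
  set t := Real.sqrt ((n : ℝ) + 1) with htdef
  have hn1 : (1 : ℝ) ≤ n := by exact_mod_cast hn
  have hs : 0 < s := Real.sqrt_pos.mpr (by linarith)
  have ht : 0 < t := Real.sqrt_pos.mpr (by linarith)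
  have hs2 : s ^ 2 = n := Real.sq_sqrt (by linarith)
  have ht2 : t ^ 2 = (n : ℝ) + 1 := Real.sq_sqrt (by linarith)
  have hts : s ≤ t := by nlinarith
  have hq := qRatio_pos n
  have hqu := qRatio_le n hn
  have hql := qRatio_ge n hn
  have hD : (0:ℝ) < s * t * (s + t) := by positivity
  have hN : (0:ℝ) < 2 * (n : ℝ) + 1 := by positivity
  constructor
  · rw [inv_eq_one_div, mul_div_assoc', div_le_div_iff₀ hD hN]
    nlinarith [mul_le_mul_of_nonneg_right hql (by positivity : (0:ℝ) ≤ t * (s + t)),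
      mul_le_mul_of_nonneg_left hts hs.le]
  · rw [inv_eq_one_div, mul_div_assoc', div_le_div_iff₀ hN hD]
    nlinarith [mul_le_mul_of_nonneg_right hqu (by positivity : (0:ℝ) ≤ t * (s + t)),
      sq_nonneg (s - t)]

lemma tele_hasSum (τ : ℕ) (hτ : 1 ≤ τ) :
    HasSum (fun k : ℕ => (Real.sqrt (((τ + k : ℕ)) : ℝ))⁻¹ - (Real.sqrt (((τ + k : ℕ) : ℝ) + 1))⁻¹)
      (Real.sqrt τ)⁻¹ := by
  set f : ℕ → ℝ := fun k => (Real.sqrt ((τ : ℝ) + k))⁻¹ with hf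
  have hτ1 : (1 : ℝ) ≤ τ := by exact_mod_cast hτ
  have hanti : ∀ k : ℕ, f (k + 1) ≤ f k := by
    intro k
    apply inv_anti₀
    · apply Real.sqrt_pos.mpr
      have := Nat.cast_nonneg (α := ℝ) k
      linarith
    · apply Real.sqrt_le_sqrt; push_cast; linarith
  have hnonneg : ∀ k : ℕ, 0 ≤ f k - f (k + 1) := fun k => sub_nonneg.mpr (hanti k)
  have htend : Filter.Tendsto f Filter.atTop (nhds 0) := by
    have hfeq : f = fun k : ℕ => Real.sqrt (((τ : ℝ) + k)⁻¹) := by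
      funext k; rw [hf, Real.sqrt_inv]
    rw [hfeq]
    have hinner : Filter.Tendsto (fun k : ℕ => ((τ : ℝ) + k)⁻¹) Filter.atTop (nhds 0) :=
      tendsto_inv_atTop_zero.comp
        (Filter.tendsto_atTop_add_const_left _ _ tendsto_natCast_atTop_atTop)
    have hcont : Filter.Tendsto Real.sqrt (nhds 0) (nhds 0) := by
      have := Real.continuous_sqrt.tendsto 0
      simpa using this
    exact hcont.comp hinner
  have key : HasSum (fun k : ℕ => f k - f (k + 1)) (f 0) := by
    rw [hasSum_iff_tendsto_nat_of_nonneg hnonneg]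
    have hps : ∀ n : ℕ, ∑ i ∈ Finset.range n, (f i - f (i + 1)) = f 0 - f n :=
      fun n => Finset.sum_range_sub' f n
    simp only [hps]
    have := htend.const_sub (f 0)
    simpa using this
  have h0 : f 0 = (Real.sqrt τ)⁻¹ := by simp [hf]
  rw [h0] at key
  have hfun : (fun k : ℕ => (Real.sqrt (((τ + k : ℕ)) : ℝ))⁻¹ - (Real.sqrt (((τ + k : ℕ) : ℝ) + 1))⁻¹)
      = fun k => f k - f (k + 1) := by
    funext k
    simp only [hf]
    push_cast
    ring_nf
  rw [hfun]
  exact key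

/-- There are absolute constants `c₁, c₂ > 0` such that for every integer `τ ≥ 1`,
`c₁ · τ^{-1/2} ≤ Σ_{k=τ}^{∞} c_k ≤ c₂ · τ^{-1/2}`. -/
theorem arcsinCoeff_tail_sum_bounds :
    ∃ c₁ c₂ : ℝ, c₁ > 0 ∧ c₂ > 0 ∧ ∀ τ : ℕ, 1 ≤ τ →
      c₁ * (Real.sqrt τ)⁻¹ ≤ ∑' k : ℕ, arcsinCoeff (τ + k) ∧
      (∑' k : ℕ, arcsinCoeff (τ + k)) ≤ c₂ * (Real.sqrt τ)⁻¹ := by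
  refine ⟨1/3, 6, by norm_num, by norm_num, fun τ hτ => ?_⟩
  have htele := tele_hasSum τ hτ
  set T : ℕ → ℝ := fun k =>
    (Real.sqrt (((τ + k : ℕ)) : ℝ))⁻¹ - (Real.sqrt (((τ + k : ℕ) : ℝ) + 1))⁻¹ with hT
  have hbd : ∀ k : ℕ, (1/3 : ℝ) * T k ≤ arcsinCoeff (τ + k) ∧ arcsinCoeff (τ + k) ≤ 6 * T k :=
    fun k => arcsinCoeff_bounds (τ + k) (by omega)
  have hTsummable : Summable T := htele.summable
  have hsummable : Summable (fun k => arcsinCoeff (τ + k)) := by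
    apply Summable.of_nonneg_of_le (fun k => ?_) (fun k => (hbd k).2)
      (hTsummable.mul_left 6)
    unfold arcsinCoeff; positivity
  constructor
  · have h1 : HasSum (fun k => (1/3 : ℝ) * T k) ((1/3) * (Real.sqrt τ)⁻¹) :=
      htele.mul_left _
    calc (1/3 : ℝ) * (Real.sqrt τ)⁻¹ = ∑' k, (1/3 : ℝ) * T k := h1.tsum_eq.symm
    _ ≤ ∑' k, arcsinCoeff (τ + k) :=
        Summable.tsum_le_tsum (fun k => (hbd k).1) h1.summable hsummable
  · have h2 : HasSum (fun k => (6 : ℝ) * T k) (6 * (Real.sqrt τ)⁻¹) :=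
      htele.mul_left _
    calc (∑' k, arcsinCoeff (τ + k)) ≤ ∑' k, (6 : ℝ) * T k :=
        Summable.tsum_le_tsum (fun k => (hbd k).2) hsummable h2.summable
    _ = 6 * (Real.sqrt τ)⁻¹ := h2.tsum_eq
end

section
/- There is an absolute constant c > 0 such that the following holds for every integer d ≥ 2. Let A ∈ ℝ^{d×d} be a positive semidefinite matrix with A_{ii} = 1 for all i and A_{ij} ≥ −1/2 for all i, j, and let w ∈ ℝ^d have nonnegative entries. Then Σ_{i,j=1}^{d} w_i w_j · arcsin(A_{ij}) ≥ c · ‖w‖₁² / (d · √(log d)). -/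
open Real Finset Set


/-- Taylor coefficients of `1/√(1-t²)`: `bb k = C(2k,k)/4^k`, defined by recursion. -/
noncomputable def bb : ℕ → ℝ
  | 0 => 1
  | (k+1) => bb k * (2*k+1) / (2*k+2)

lemma bb_pos : ∀ k, 0 < bb k
  | 0 => one_pos
  | (k+1) => by
      have := bb_pos k
      unfold bb
      positivity

lemma bb_rec (k : ℕ) : (2*(k:ℝ)+2) * bb (k+1) = (2*k+1) * bb k := by
  show (2*(k:ℝ)+2) * (bb k * (2*k+1) / (2*k+2)) = _
  have h : (2*(k:ℝ)+2) ≠ 0 := by positivity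
  field_simp

lemma bb_anti (k : ℕ) : bb (k+1) ≤ bb k := by
  have h := bb_rec k
  have hk : (0:ℝ) < 2*k+2 := by positivity
  nlinarith [bb_pos k, bb_pos (k+1)]

lemma bb_le_one (k : ℕ) : bb k ≤ 1 := by
  induction k with
  | zero => simp [bb]
  | succ n ih => exact le_trans (bb_anti n) ih

lemma bb_one : bb 1 = 1/2 := by norm_num [bb]

lemma bb_le_half {k : ℕ} (hk : 1 ≤ k) : bb k ≤ 1/2 := by
  induction k with
  | zero => omega
  | succ n ih =>
      rcases Nat.eq_or_lt_of_le hk with h | h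
      · rw [← h]; norm_num [bb_one]
      · exact le_trans (bb_anti n) (ih (by omega))

/-- lower bound `bb k ≥ 1/(2√k)` in squared form. -/
lemma bb_sq_lower {k : ℕ} (hk : 1 ≤ k) : 1 ≤ 4 * k * (bb k)^2 := by
  induction k with
  | zero => omega
  | succ n ih =>
      rcases Nat.eq_or_lt_of_le hk with h | h
      · rw [← h]; norm_num [bb_one]
      · have hn : 1 ≤ n := by omega
        have h1 := ih hn
        have h2 := bb_rec n
        have hb := bb_pos n
        have hb1 := bb_pos (n+1)
        have hnn : (0:ℝ) ≤ (n:ℝ) := Nat.cast_nonneg n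
        have h3 : (2*(n:ℝ)+2)^2 * bb (n+1)^2 = (2*(n:ℝ)+1)^2 * bb n ^2 := by
          have := congrArg (fun x : ℝ => x^2) h2
          simpa [mul_pow] using this
        have h4 : (0:ℝ) < (2*(n:ℝ)+2)^2 := by positivity
        have h5 : (2*(n:ℝ)+2)^2 * 1 ≤ (2*(n:ℝ)+2)^2 * (4 * n * bb n ^2) :=
          mul_le_mul_of_nonneg_left h1 (le_of_lt h4)
        push_cast
        nlinarith [h3, h5, hnn, sq_nonneg (bb n), mul_nonneg hnn (sq_nonneg (bb n))]



/-- partial sum of the Taylor series of `1/√(1-t²)`. -/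
noncomputable def PP (N : ℕ) (t : ℝ) : ℝ := ∑ k ∈ range (N+1), bb k * t^(2*k)
/-- its derivative. -/
noncomputable def PP' (N : ℕ) (t : ℝ) : ℝ :=
  ∑ k ∈ range (N+1), bb k * ((2*k) * t^(2*k - 1))
/-- partial sum of the Taylor series of `arcsin`. -/
noncomputable def SS (N : ℕ) (x : ℝ) : ℝ := ∑ k ∈ range (N+1), bb k/(2*k+1) * x^(2*k+1)

lemma hasDerivAt_PP (N : ℕ) (t : ℝ) : HasDerivAt (PP N) (PP' N t) t := by
  apply HasDerivAt.fun_sum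
  intro k _
  simpa using ((hasDerivAt_pow (2*k) t).const_mul (bb k))

lemma hasDerivAt_SS (N : ℕ) (x : ℝ) : HasDerivAt (SS N) (PP N x) x := by
  apply HasDerivAt.fun_sum
  intro k _
  have h := (hasDerivAt_pow (2*k+1) x).const_mul (bb k/(2*(k:ℝ)+1))
  push_cast at h
  refine h.congr_deriv ?_; symm
  have hne : (2*(k:ℝ)+1) ≠ 0 := by positivity
  field_simp

lemma PP_zero (N : ℕ) : PP N 0 = 1 := by
  unfold PP
  rw [Finset.sum_eq_single 0]
  · simp [bb]
  · intro b _ hb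
    rw [zero_pow (by omega), mul_zero]
  · intro h; exact absurd (Finset.mem_range.2 (Nat.succ_pos N)) h

lemma SS_zero (N : ℕ) : SS N 0 = 0 := by
  unfold SS; simp

lemma PP_even (N : ℕ) (t : ℝ) : PP N (-t) = PP N t := by
  unfold PP
  refine Finset.sum_congr rfl fun k _ => ?_
  rw [pow_mul, neg_sq, ← pow_mul]

lemma SS_odd (N : ℕ) (x : ℝ) : SS N (-x) = - SS N x := by
  unfold SS
  rw [← Finset.sum_neg_distrib]
  refine Finset.sum_congr rfl fun k _ => ?_
  rw [Odd.neg_pow (odd_two_mul_add_one k)]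
  ring

lemma PP_nonneg (N : ℕ) {t : ℝ} (ht : 0 ≤ t) : 0 ≤ PP N t := by
  unfold PP
  exact Finset.sum_nonneg fun k _ => mul_nonneg (bb_pos k).le (pow_nonneg ht _)

/-- The key algebraic identity. -/
lemma key_id (N : ℕ) (t : ℝ) :
    (1 - t^2) * PP' N t - t * PP N t = -((2*N+1) * bb N * t^(2*N+1)) := by
  induction N with
  | zero =>
      norm_num [PP, PP', bb]
  | succ n ih =>
      have hPP : PP (n+1) t = PP n t + bb (n+1) * t^(2*(n+1)) := by
        unfold PP; rw [Finset.sum_range_succ]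
      have hPP' : PP' (n+1) t = PP' n t + bb (n+1) * ((2*((n:ℝ)+1)) * t^(2*n+1)) := by
        unfold PP'; rw [Finset.sum_range_succ]
        have : 2*(n+1) - 1 = 2*n+1 := by omega
        rw [this]
        push_cast
        ring
      have hrec := bb_rec n
      rw [hPP, hPP']
      push_cast
      have h2 : 2*(n+1) = 2*n+2 := by omega
      rw [h2]
      linear_combination ih + t^(2*n+1) * hrec


/-- monotonicity helper -/
lemma mono_of_deriv {a b : ℝ} {f f' : ℝ → ℝ} (hab : a ≤ b)
    (hc : ContinuousOn f (Icc a b))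
    (hd : ∀ x ∈ Ioo a b, HasDerivAt f (f' x) x)
    (h0 : ∀ x ∈ Ioo a b, 0 ≤ f' x) : f a ≤ f b := by
  have hmono := monotoneOn_of_deriv_nonneg (convex_Icc a b) hc
    (fun x hx => ((hd x (by rwa [interior_Icc] at hx)).differentiableAt).differentiableWithinAt)
    (fun x hx => by
      rw [(hd x (by rwa [interior_Icc] at hx)).deriv]
      exact h0 x (by rwa [interior_Icc] at hx))
  exact hmono (Set.left_mem_Icc.2 hab) (Set.right_mem_Icc.2 hab) hab

lemma continuous_PP (N : ℕ) : Continuous (PP N) := by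
  unfold PP
  exact continuous_finset_sum _ fun k _ => continuous_const.mul (continuous_pow (2*k))

lemma continuous_SS (N : ℕ) : Continuous (SS N) := by
  unfold SS
  exact continuous_finset_sum _ fun k _ => continuous_const.mul (continuous_pow (2*k+1))

lemma sqrt_pos_of_mem {y : ℝ} (hy : y ∈ Ioo (-1:ℝ) 1) : 0 < Real.sqrt (1 - y^2) := by
  apply Real.sqrt_pos.2
  nlinarith [hy.1, hy.2]

lemma hasDerivAt_s {y : ℝ} (hy : y ∈ Ioo (-1:ℝ) 1) :
    HasDerivAt (fun z => Real.sqrt (1 - z^2)) (-y / Real.sqrt (1 - y^2)) y := by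
  have h1 : HasDerivAt (fun z : ℝ => 1 - z^2) (-(2*y)) y := by
    simpa using ((hasDerivAt_pow 2 y).const_sub 1)
  have h2 := (Real.hasDerivAt_sqrt (by nlinarith [hy.1, hy.2] : 1 - y^2 ≠ 0)).comp y h1
  refine h2.congr_deriv ?_; symm
  have hs := sqrt_pos_of_mem hy
  field_simp

/-- derivative of `v N y = PP N y * √(1-y²)`. -/
lemma hasDerivAt_v (N : ℕ) {y : ℝ} (hy : y ∈ Ioo (-1:ℝ) 1) :
    HasDerivAt (fun z => PP N z * Real.sqrt (1 - z^2))
      (-((2*N+1) * bb N * y^(2*N+1)) / Real.sqrt (1 - y^2)) y := by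
  have h := (hasDerivAt_PP N y).mul (hasDerivAt_s hy)
  refine h.congr_deriv ?_; symm
  have hs := sqrt_pos_of_mem hy
  have hsq : Real.sqrt (1 - y^2) ^ 2 = 1 - y^2 := Real.sq_sqrt (by nlinarith [hy.1, hy.2])
  field_simp
  linear_combination -key_id N y - PP' N y * hsq

/-- C1: `PP N t √(1-t²) ≤ 1` on `[0,1)`. -/
lemma v_le_one (N : ℕ) {t : ℝ} (h0 : 0 ≤ t) (h1 : t < 1) :
    PP N t * Real.sqrt (1 - t^2) ≤ 1 := by
  have key := mono_of_deriv (f := fun z => -(PP N z * Real.sqrt (1 - z^2)))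
    (f' := fun y => -(-((2*N+1) * bb N * y^(2*N+1)) / Real.sqrt (1 - y^2))) h0
    (Continuous.continuousOn (Continuous.neg ((continuous_PP N).mul
      (Real.continuous_sqrt.comp (by continuity)))))
    (fun y hy => (hasDerivAt_v N ⟨by linarith [hy.1], lt_trans hy.2 h1⟩).neg)
    (fun y hy => by
      have hy' : (0:ℝ) < y := hy.1
      have hs := sqrt_pos_of_mem ⟨by linarith, lt_trans hy.2 h1⟩
      have : 0 ≤ (2*(N:ℝ)+1) * bb N * y^(2*N+1) := by
        have := bb_pos N
        positivity
      show (0:ℝ) ≤ -(-((2*(N:ℝ)+1) * bb N * y^(2*N+1)) / Real.sqrt (1 - y^2))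
      rw [neg_div, neg_neg]
      exact div_nonneg this hs.le)
  simp only [PP_zero, one_mul] at key
  norm_num at key
  linarith

lemma sqrt_ge {y : ℝ} (h0 : -(1/2) ≤ y) (h1 : y ≤ 1/2) : (4/5 : ℝ) ≤ Real.sqrt (1 - y^2) := by
  have h2 : (0:ℝ) ≤ 1 - y^2 := by nlinarith
  nlinarith [Real.sq_sqrt h2, Real.sqrt_nonneg (1 - y^2)]

/-- C4: `PP N t √(1-t²) ≥ 1 - t^(2N+2)` on `[0,1/2]`. -/
lemma u_lemma (N : ℕ) {t : ℝ} (h0 : 0 ≤ t) (h1 : t ≤ 1/2) :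
    1 - t^(2*N+2) ≤ PP N t * Real.sqrt (1 - t^2) := by
  have key := mono_of_deriv (f := fun z => PP N z * Real.sqrt (1 - z^2) - (1 - z^(2*N+2)))
    (f' := fun y => -((2*N+1) * bb N * y^(2*N+1)) / Real.sqrt (1 - y^2)
      + (2*(N:ℝ)+2) * y^(2*N+1)) h0
    (Continuous.continuousOn (((continuous_PP N).mul
      (Real.continuous_sqrt.comp (by continuity))).sub
      (continuous_const.sub (continuous_pow (2*N+2)))))
    (fun y hy => by
      have hy1 : y ∈ Ioo (-1:ℝ) 1 := ⟨by linarith [hy.1], by linarith [hy.2]⟩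
      have hd1 := hasDerivAt_v N hy1
      have hd2 : HasDerivAt (fun z : ℝ => 1 - z^(2*N+2)) (-((2*(N:ℝ)+2) * y^(2*N+1))) y := by
        have := (hasDerivAt_pow (2*N+2) y).const_sub 1
        have he : 2*N+2-1 = 2*N+1 := by omega
        rw [he] at this
        refine this.congr_deriv ?_; symm
        push_cast; ring
      have := hd1.sub hd2
      refine this.congr_deriv ?_; symm
      ring)
    (fun y hy => by
      have hy2 : y ≤ 1/2 := by linarith [hy.2]
      have hy0 : 0 ≤ y := le_of_lt hy.1
      have hs5 : (4/5 : ℝ) ≤ Real.sqrt (1 - y^2) := sqrt_ge (by linarith) hy2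
      have hs : (0:ℝ) < Real.sqrt (1 - y^2) := by linarith
      show (0:ℝ) ≤ -((2*(N:ℝ)+1) * bb N * y^(2*N+1)) / Real.sqrt (1 - y^2)
        + (2*(N:ℝ)+2) * y^(2*N+1)
      rw [neg_div, neg_add_eq_sub, sub_nonneg, div_le_iff₀ hs]
      have hcoef : (2*(N:ℝ)+1) * bb N ≤ (2*(N:ℝ)+2) * (4/5) := by
        rcases Nat.eq_zero_or_pos N with h | h
        · subst h
          norm_num [show bb 0 = 1 from rfl]
        · have := bb_le_half h
          have hN : (1:ℝ) ≤ N := by exact_mod_cast h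
          nlinarith
      have hyp : (0:ℝ) ≤ y^(2*N+1) := pow_nonneg hy0 _
      calc (2*(N:ℝ)+1) * bb N * y^(2*N+1) ≤ (2*(N:ℝ)+2) * (4/5) * y^(2*N+1) :=
            mul_le_mul_of_nonneg_right hcoef hyp
        _ ≤ (2*(N:ℝ)+2) * y^(2*N+1) * Real.sqrt (1 - y^2) := by
              have hc : (0:ℝ) ≤ (2*(N:ℝ)+2) * y^(2*N+1) := by positivity
              nlinarith [mul_le_mul_of_nonneg_left hs5 hc])
  simp only [PP_zero, one_mul] at key
  norm_num at key
  linarith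

/-- C3: `arcsin x ≥ SS N x` on `[0,1]`. -/
lemma SS_le_arcsin (N : ℕ) {x : ℝ} (h0 : 0 ≤ x) (h1 : x ≤ 1) : SS N x ≤ Real.arcsin x := by
  have key := mono_of_deriv (f := fun y => Real.arcsin y - SS N y)
    (f' := fun y => 1 / Real.sqrt (1 - y^2) - PP N y) h0
    ((Real.continuous_arcsin.sub (continuous_SS N)).continuousOn)
    (fun y hy => by
      have h1' : y ≠ -1 := by intro h; rw [h] at hy; linarith [hy.1]
      have h2' : y ≠ 1 := by intro h; rw [h] at hy; linarith [hy.2, h1]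
      exact (Real.hasDerivAt_arcsin h1' h2').sub (hasDerivAt_SS N y))
    (fun y hy => by
      have hy1 : y < 1 := lt_of_lt_of_le hy.2 h1
      have hy0 : 0 ≤ y := le_of_lt hy.1
      have hs : (0:ℝ) < Real.sqrt (1 - y^2) := by
        apply Real.sqrt_pos.2; nlinarith
      have hv := v_le_one N hy0 hy1
      show (0:ℝ) ≤ 1 / Real.sqrt (1 - y^2) - PP N y
      rw [sub_nonneg, le_div_iff₀ hs]
      exact hv)
  simp only [Real.arcsin_zero, SS_zero, sub_zero] at key
  linarith

/-- C5: tail bound on `[0,1/2]`. -/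
lemma tail_bound (N : ℕ) {x : ℝ} (h0 : 0 ≤ x) (h1 : x ≤ 1/2) :
    Real.arcsin x - SS N x ≤ (5/4) * (1/4:ℝ)^(N+1) * x := by
  have key := mono_of_deriv
    (f := fun y => (5/4) * (1/4:ℝ)^(N+1) * y - (Real.arcsin y - SS N y))
    (f' := fun y => (5/4) * (1/4:ℝ)^(N+1) - (1 / Real.sqrt (1 - y^2) - PP N y)) h0
    ((continuous_const.mul continuous_id).sub
      (Real.continuous_arcsin.sub (continuous_SS N))|>.continuousOn)
    (fun y hy => by
      have h1' : y ≠ -1 := by intro h; rw [h] at hy; linarith [hy.1]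
      have h2' : y ≠ 1 := by intro h; rw [h] at hy; linarith [hy.2, h1]
      have hda := (Real.hasDerivAt_arcsin h1' h2').sub (hasDerivAt_SS N y)
      have hdl : HasDerivAt (fun y : ℝ => (5/4) * (1/4:ℝ)^(N+1) * y)
          ((5/4) * (1/4:ℝ)^(N+1)) y := by
        simpa using (hasDerivAt_id y).const_mul ((5/4) * (1/4:ℝ)^(N+1))
      exact hdl.sub hda)
    (fun y hy => by
      have hy2 : y ≤ 1/2 := by linarith [hy.2]
      have hy0 : 0 ≤ y := le_of_lt hy.1
      have hs5 : (4/5 : ℝ) ≤ Real.sqrt (1 - y^2) := sqrt_ge (by linarith) hy2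
      have hs : (0:ℝ) < Real.sqrt (1 - y^2) := by linarith
      have hu := u_lemma N hy0 hy2
      have hpow : y^(2*N+2) ≤ (1/4:ℝ)^(N+1) := by
        have : y^(2*N+2) ≤ (1/2:ℝ)^(2*N+2) := pow_le_pow_left₀ hy0 hy2 _
        calc y^(2*N+2) ≤ (1/2:ℝ)^(2*N+2) := this
          _ = (1/4:ℝ)^(N+1) := by
              rw [show 2*N+2 = 2*(N+1) by ring, pow_mul]; norm_num
      show (0:ℝ) ≤ (5/4) * (1/4:ℝ)^(N+1) - (1 / Real.sqrt (1 - y^2) - PP N y)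
      rw [sub_nonneg]
      have hPP : (1 - y^(2*N+2)) / Real.sqrt (1 - y^2) ≤ PP N y := by
        rw [div_le_iff₀ hs]; exact hu
      have h15 : 1 / Real.sqrt (1 - y^2) ≤ 5/4 := by
        rw [div_le_iff₀ hs]; nlinarith
      have : 1 / Real.sqrt (1 - y^2) - PP N y ≤ y^(2*N+2) / Real.sqrt (1 - y^2) := by
        have : 1 / Real.sqrt (1 - y^2) - (1 - y^(2*N+2)) / Real.sqrt (1 - y^2)
            = y^(2*N+2) / Real.sqrt (1 - y^2) := by
          rw [div_sub_div_same]; ring_nf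
        linarith [hPP]
      have h2 : y^(2*N+2) / Real.sqrt (1 - y^2) ≤ (1/4:ℝ)^(N+1) * (5/4) := by
        rw [div_le_iff₀ hs]
        have hyn : (0:ℝ) ≤ y^(2*N+2) := pow_nonneg hy0 _
        nlinarith [pow_nonneg (show (0:ℝ) ≤ 1/4 by norm_num) (N+1)]
      linarith)
  simp only [Real.arcsin_zero, SS_zero, sub_zero, mul_zero] at key
  norm_num at key
  linarith

/-- C7: the final pointwise inequality. -/
lemma arcsin_ge_SS (N : ℕ) {x : ℝ} (hl : -(1/2) ≤ x) (hu : x ≤ 1) :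
    SS N x - (1/4:ℝ)^(N+1) ≤ Real.arcsin x := by
  have hε : (0:ℝ) < (1/4:ℝ)^(N+1) := by positivity
  rcases le_or_gt 0 x with h | h
  · linarith [SS_le_arcsin N h hu]
  · have hy0 : 0 ≤ -x := by linarith
    have hy1 : -x ≤ 1/2 := by linarith
    have htb := tail_bound N hy0 hy1
    rw [Real.arcsin_neg, SS_odd] at htb
    nlinarith

/-- Gram decomposition of a real PSD matrix. -/
lemma gram_of_psd {d : ℕ} {A : Matrix (Fin d) (Fin d) ℝ} (hA : A.PosSemidef) :
    ∃ B : Matrix (Fin d) (Fin d) ℝ, ∀ i j, A i j = ∑ r, B r i * B r j := by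
  open scoped MatrixOrder in
  obtain ⟨B, hB⟩ := CStarAlgebra.nonneg_iff_eq_star_mul_self.mp hA.nonneg
  refine ⟨B, fun i j => ?_⟩
  rw [hB]
  simp [Matrix.mul_apply, Matrix.star_eq_conjTranspose, Matrix.conjTranspose_apply]

/-- entrywise powers of a PSD matrix are Gram matrices. -/
lemma pow_gram {d : ℕ} {A : Matrix (Fin d) (Fin d) ℝ} (hA : A.PosSemidef) (m : ℕ) :
    ∃ (ι : Type) (_ : Fintype ι) (v : ι → Fin d → ℝ),
      ∀ i j, (A i j)^m = ∑ r, v r i * v r j := by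
  obtain ⟨B, hB⟩ := gram_of_psd hA
  induction m with
  | zero =>
      exact ⟨Unit, inferInstance, fun _ _ => 1, fun i j => by simp⟩
  | succ n ih =>
      obtain ⟨ι, hι, v, hv⟩ := ih
      refine ⟨ι × Fin d, inferInstance, fun rs i => v rs.1 i * B rs.2 i, fun i j => ?_⟩
      rw [pow_succ, hv i j, hB i j, Finset.sum_mul_sum]
      rw [Fintype.sum_prod_type]
      exact Finset.sum_congr rfl fun r _ => Finset.sum_congr rfl fun s _ => by ring

/-- the quadratic form of an entrywise power of a PSD matrix is nonnegative. -/
lemma quad_pow_nonneg {d : ℕ} {A : Matrix (Fin d) (Fin d) ℝ} (hA : A.PosSemidef) (m : ℕ)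
    (w : Fin d → ℝ) : 0 ≤ ∑ i, ∑ j, w i * w j * (A i j)^m := by
  obtain ⟨ι, hι, v, hv⟩ := pow_gram hA m
  have key : ∑ r : ι, (∑ i, w i * v r i)^2 = ∑ i, ∑ j, w i * w j * (A i j)^m := by
    simp_rw [pow_two, Finset.sum_mul_sum]
    rw [Finset.sum_comm]
    refine Finset.sum_congr rfl fun i _ => ?_
    rw [Finset.sum_comm]
    refine Finset.sum_congr rfl fun j _ => ?_
    rw [hv, Finset.mul_sum]
    exact Finset.sum_congr rfl fun r _ => by ring
  rw [← key]
  exact Finset.sum_nonneg fun r _ => sq_nonneg _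

/-- off-diagonal entries of a PSD matrix with unit diagonal are at most 1. -/
lemma entry_le_one {d : ℕ} {A : Matrix (Fin d) (Fin d) ℝ} (hA : A.PosSemidef)
    (hdiag : ∀ i, A i i = 1) (i j : Fin d) : A i j ≤ 1 := by
  rcases eq_or_ne i j with rfl | hij
  · exact le_of_eq (hdiag i)
  · have hsym : A j i = A i j := by
      have := congrFun (congrFun hA.1 i) j
      simpa [Matrix.conjTranspose_apply] using this
    have h := hA.dotProduct_mulVec_nonneg (Pi.single i (1:ℝ) - Pi.single j 1)
    simp only [star_trivial, Matrix.mulVec_sub, Matrix.mulVec_single_one, Matrix.col_apply,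
      dotProduct_sub, sub_dotProduct, single_dotProduct,
      mul_one, Pi.sub_apply] at h
    rw [hdiag i, hdiag j, hsym] at h
    linarith


/-- odd powers of entries in `[-1/2, 1]` are `≥ -(1/2)^(2k+1)`. -/
lemma odd_pow_lower {x : ℝ} (hl : -(1/2) ≤ x) (hu : x ≤ 1) (k : ℕ) :
    -((1/2:ℝ)^(2*k+1)) ≤ x^(2*k+1) := by
  rcases le_or_gt 0 x with h | h
  · have : (0:ℝ) ≤ x^(2*k+1) := pow_nonneg h _
    have : (0:ℝ) < (1/2:ℝ)^(2*k+1) := by positivity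
    linarith
  · have h1 : (0:ℝ) ≤ -x := by linarith
    have h2 : -x ≤ 1/2 := by linarith
    have h3 : (-x)^(2*k+1) ≤ (1/2:ℝ)^(2*k+1) := pow_le_pow_left₀ h1 h2 _
    have h4 : (-x)^(2*k+1) = -(x^(2*k+1)) := Odd.neg_pow (odd_two_mul_add_one k) x
    linarith

/-- lower bound for the quadratic form of an odd Hadamard power. -/
lemma Qk_lower {d : ℕ} {A : Matrix (Fin d) (Fin d) ℝ} (hA : A.PosSemidef)
    (hdiag : ∀ i, A i i = 1) (hlow : ∀ i j, A i j ≥ -(1/2))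
    {w : Fin d → ℝ} (hw : ∀ i, 0 ≤ w i) (k : ℕ) :
    (∑ i, (w i)^2) - (1/2:ℝ)^(2*k+1) * (∑ i, w i)^2
      ≤ ∑ i, ∑ j, w i * w j * (A i j)^(2*k+1) := by
  set β : ℝ := (1/2:ℝ)^(2*k+1) with hβ
  have hβ0 : 0 ≤ β := by positivity
  have step1 : ∑ i, ∑ j, (w i * w j * (if i = j then (1:ℝ) else -β))
      ≤ ∑ i, ∑ j, w i * w j * (A i j)^(2*k+1) := by
    refine Finset.sum_le_sum fun i _ => Finset.sum_le_sum fun j _ => ?_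
    rcases eq_or_ne i j with rfl | hij
    · simp [hdiag i]
    · simp only [if_neg hij]
      refine mul_le_mul_of_nonneg_left ?_ (mul_nonneg (hw i) (hw j))
      exact odd_pow_lower (hlow i j) (entry_le_one hA hdiag i j) k
  have step2 : ∑ i, ∑ j, (w i * w j * (if i = j then (1:ℝ) else -β))
      = (1+β) * (∑ i, (w i)^2) - β * (∑ i, w i)^2 := by
    have inner : ∀ i : Fin d, ∑ j, (w i * w j * (if i = j then (1:ℝ) else -β))
        = (1+β) * (w i)^2 - β * (w i * ∑ j, w j) := by
      intro i
      have h1 : ∀ j : Fin d, w i * w j * (if i = j then (1:ℝ) else -β)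
          = (if i = j then (1+β) * (w i * w j) else 0) - β * (w i * w j) := by
        intro j
        rcases eq_or_ne i j with rfl | hij
        · simp; ring
        · simp [if_neg hij]; ring
      simp_rw [h1]
      rw [Finset.sum_sub_distrib, Finset.sum_ite_eq]
      rw [if_pos (Finset.mem_univ i)]
      simp only [← Finset.mul_sum]
      ring
    simp_rw [inner]
    simp only [Finset.sum_sub_distrib, ← Finset.mul_sum, ← Finset.sum_mul]
    ring
  have h3 : 0 ≤ β * (∑ i, (w i)^2) :=
    mul_nonneg hβ0 (Finset.sum_nonneg fun i _ => sq_nonneg _)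
  calc (∑ i, (w i)^2) - β * (∑ i, w i)^2
      ≤ (1+β) * (∑ i, (w i)^2) - β * (∑ i, w i)^2 := by nlinarith
    _ = ∑ i, ∑ j, (w i * w j * (if i = j then (1:ℝ) else -β)) := step2.symm
    _ ≤ _ := step1


lemma bb_anti' {k m : ℕ} (h : k ≤ m) : bb m ≤ bb k := by
  induction h with
  | refl => exact le_refl _
  | step h ih => exact le_trans (bb_anti _) ih

lemma bb_sqrt_lower {k : ℕ} (hk : 1 ≤ k) : 1 / (2 * Real.sqrt k) ≤ bb k := by
  have h1 := bb_sq_lower hk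
  have hs : Real.sqrt k ^ 2 = (k:ℝ) := Real.sq_sqrt (Nat.cast_nonneg k)
  have hs0 : 0 < Real.sqrt k := Real.sqrt_pos.2 (by exact_mod_cast hk)
  have hb := bb_pos k
  rw [div_le_iff₀ (by positivity)]
  have ha : (2 * Real.sqrt k * bb k)^2 = 4 * k * bb k^2 := by
    rw [mul_pow, mul_pow, hs]; ring
  nlinarith [ha, mul_pos hs0 hb]

lemma nat_le_four_pow : ∀ K : ℕ, 1 ≤ K → K ≤ 4^(K-1) := by
  intro K
  induction K with
  | zero => omega
  | succ n ih =>
      intro _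
      rcases Nat.eq_zero_or_pos n with rfl | hn
      · norm_num
      · have h1 := ih hn
        have h2 : 4^((n+1)-1) = 4 * 4^(n-1) := by
          rw [show (n+1)-1 = (n-1)+1 by omega, pow_succ]; ring
        have h3 : 1 ≤ 4^(n-1) := Nat.one_le_pow _ _ (by norm_num)
        omega

set_option maxHeartbeats 4000000 in
/-- There is an absolute constant `c > 0` such that for every integer `d ≥ 2`, every
positive semidefinite `A ∈ ℝ^{d×d}` with unit diagonal and entries `≥ -1/2`, and every
nonnegative `w ∈ ℝ^d`, one has
`Σ_{i,j} w_i w_j arcsin(A_{ij}) ≥ c · ‖w‖₁² / (d · √(log d))`. -/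
theorem sum_arcsin_psd_lower_bound :
    ∃ c : ℝ, c > 0 ∧ ∀ d : ℕ, 2 ≤ d → ∀ A : Matrix (Fin d) (Fin d) ℝ,
      A.PosSemidef → (∀ i, A i i = 1) → (∀ i j, A i j ≥ -(1 / 2)) →
      ∀ w : Fin d → ℝ, (∀ i, 0 ≤ w i) →
        ∑ i, ∑ j, w i * w j * Real.arcsin (A i j) ≥
          c * (∑ i, |w i|) ^ 2 / (d * Real.sqrt (Real.log d)) := by
  refine ⟨1/64, by norm_num, fun d hd A hA hdiag hlow w hw => ?_⟩
  -- parameters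
  set K := Nat.clog 2 d with hK
  set N := 2*K with hN
  have hK1 : 1 ≤ K := Nat.clog_pos one_lt_two hd
  have hd2 : d ≤ 2^K := Nat.le_pow_clog one_lt_two d
  have hd2' : 2^(K-1) < d := Nat.pow_pred_clog_lt_self one_lt_two (by omega)
  -- real basics
  have hdR : (2:ℝ) ≤ (d:ℝ) := by exact_mod_cast hd
  have hdR0 : (0:ℝ) < d := by linarith
  have hKR : (1:ℝ) ≤ (K:ℝ) := by exact_mod_cast hK1
  have hsK : (0:ℝ) < Real.sqrt K := Real.sqrt_pos.2 (by linarith)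
  have hsKsq : Real.sqrt K ^ 2 = (K:ℝ) := Real.sq_sqrt (by linarith)
  have hlog2 : (0.6931471803:ℝ) < Real.log 2 := Real.log_two_gt_d9
  have hlogd : Real.log 2 ≤ Real.log d := Real.log_le_log (by norm_num) hdR
  have hlogd0 : (0:ℝ) < Real.log d := by linarith
  have hslog : (0:ℝ) < Real.sqrt (Real.log d) := Real.sqrt_pos.2 hlogd0
  -- K ≤ 4 log d
  have hK4 : (K:ℝ) ≤ 4 * Real.log d := by
    have h1 : ((2:ℝ))^(K-1) ≤ (d:ℝ) := by exact_mod_cast hd2'.le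
    have h2 : ((K-1 : ℕ):ℝ) * Real.log 2 ≤ Real.log d := by
      rw [← Real.log_pow]
      exact Real.log_le_log (by positivity) h1
    have h3 : ((K-1:ℕ):ℝ) = (K:ℝ) - 1 := by
      rw [Nat.cast_sub hK1]; norm_num
    rw [h3] at h2
    nlinarith
  -- √K ≤ 2√(log d)
  have hsK4 : Real.sqrt K ≤ 2 * Real.sqrt (Real.log d) := by
    have hsl : Real.sqrt (Real.log d) ^ 2 = Real.log d := Real.sq_sqrt hlogd0.le
    nlinarith [hsK.le, hslog.le]
  -- d ≤ 2^K, d² ≤ 4^K in ℝ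
  have hd2R : (d:ℝ) ≤ 2^K := by exact_mod_cast hd2
  have h4K : ((2:ℝ)^K)^2 = 4^K := by
    rw [← pow_mul, mul_comm, pow_mul]; norm_num
  have hdsq : (d:ℝ)^2 ≤ 4^K := by
    rw [← h4K]; exact pow_le_pow_left₀ hdR0.le hd2R 2
  have h4Kpos : (0:ℝ) < 4^K := by positivity
  -- ε bound
  set ε : ℝ := (1/4:ℝ)^(N+1) with hε
  have hεe : ε = 1 / 4^(2*K+1) := by
    rw [hε, hN, one_div, inv_pow]
    norm_num
  have hεb : ε ≤ 1 / (32 * ((d:ℝ) * Real.sqrt K)) := by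
    rw [hεe]
    have hKfour : (K:ℝ) ≤ 4^(K-1) := by exact_mod_cast nat_le_four_pow K hK1
    have hsq2 : ((2:ℝ)^(K-1))^2 = 4^(K-1) := by
      rw [← pow_mul, mul_comm, pow_mul]; norm_num
    have hsKb : Real.sqrt K ≤ 2^(K-1) := by
      have h1 : Real.sqrt K ≤ Real.sqrt (4^(K-1)) := Real.sqrt_le_sqrt hKfour
      rwa [show ((4:ℝ)^(K-1)) = ((2:ℝ)^(K-1))^2 from hsq2.symm,
        Real.sqrt_sq (by positivity)] at h1
    have h2 : 32 * ((d:ℝ) * Real.sqrt K) ≤ 16 * (2^K * 2^K) := by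
      have : (2:ℝ)^K = 2 * 2^(K-1) := by
        rw [← pow_succ']; congr 1; omega
      nlinarith [hsK.le, pow_pos (show (0:ℝ) < 2 by norm_num) K,
        pow_pos (show (0:ℝ) < 2 by norm_num) (K-1), hd2R, hsKb,
        mul_le_mul hd2R hsKb hsK.le (pow_pos (show (0:ℝ) < 2 by norm_num) K).le]
    have h3 : (16:ℝ) * (2^K * 2^K) ≤ 4^(2*K+1) := by
      have e1 : (4:ℝ)^(2*K+1) = 4 * (4^K * 4^K) := by
        rw [pow_succ']  -- 4^(2K+1) = 4 * 4^(2K)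
        rw [two_mul, pow_add]
      have e2 : (2:ℝ)^K * 2^K = 4^K := by
        rw [← h4K]; ring
      have h4 : (4:ℝ) ≤ 4^K := by
        calc (4:ℝ) = 4^1 := by norm_num
          _ ≤ 4^K := pow_le_pow_right₀ (by norm_num) hK1
      rw [e1, e2]
      nlinarith
    apply one_div_le_one_div_of_le (by positivity)
    linarith
  -- notation
  set L : ℝ := ∑ i, w i with hL
  have habs : ∑ i, |w i| = L := Finset.sum_congr rfl fun i _ => abs_of_nonneg (hw i)
  have hL0 : 0 ≤ L := Finset.sum_nonneg fun i _ => hw i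
  set Q : ℕ → ℝ := fun k => ∑ i, ∑ j, w i * w j * (A i j)^(2*k+1) with hQ
  set cc : ℕ → ℝ := fun k => bb k / (2*k+1) with hcc
  have hccpos : ∀ k, 0 < cc k := fun k => div_pos (bb_pos k) (by positivity)
  -- step A
  have hLsq : ∑ i, ∑ j, (w i * w j) = L^2 := by
    rw [hL, pow_two, Finset.sum_mul_sum]
  have stepA : (∑ i, ∑ j, w i * w j * SS N (A i j)) - ε * L^2
      ≤ ∑ i, ∑ j, w i * w j * Real.arcsin (A i j) := by
    have h1 : ∀ i j, w i * w j * (SS N (A i j) - ε) ≤ w i * w j * Real.arcsin (A i j) :=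
      fun i j => mul_le_mul_of_nonneg_left
        (arcsin_ge_SS N (hlow i j) (entry_le_one hA hdiag i j))
        (mul_nonneg (hw i) (hw j))
    calc (∑ i, ∑ j, w i * w j * SS N (A i j)) - ε * L^2
        = ∑ i, ∑ j, (w i * w j * (SS N (A i j) - ε)) := by
          simp_rw [mul_sub, Finset.sum_sub_distrib]
          simp_rw [← Finset.sum_mul]
          rw [hLsq]
          ring
      _ ≤ _ := Finset.sum_le_sum fun i _ => Finset.sum_le_sum fun j _ => h1 i j
  -- step A3 : rearrange double sum
  have stepA3 : ∑ k ∈ range (N+1), cc k * Q k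
      = ∑ i, ∑ j, w i * w j * SS N (A i j) := by
    simp only [hQ, hcc, Finset.mul_sum]
    rw [Finset.sum_comm]
    refine Finset.sum_congr rfl fun i _ => ?_
    rw [Finset.sum_comm]
    refine Finset.sum_congr rfl fun j _ => ?_
    rw [SS, Finset.mul_sum]
    exact Finset.sum_congr rfl fun k _ => by ring
  -- step B : drop the small-k terms
  have stepB : ∑ k ∈ Finset.Icc K N, cc k * Q k ≤ ∑ k ∈ range (N+1), cc k * Q k := by
    refine Finset.sum_le_sum_of_subset_of_nonneg
      (fun k hk => Finset.mem_range.2 (by have := (Finset.mem_Icc.1 hk).2; omega))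
      (fun k _ _ => mul_nonneg (hccpos k).le ?_)
    rw [hQ]
    exact quad_pow_nonneg hA _ w
  -- step C : per-term lower bound for K ≤ k ≤ N
  have hsum_sq : L^2 ≤ (d:ℝ) * ∑ i, (w i)^2 := by
    have h := sq_sum_le_card_mul_sum_sq (s := (Finset.univ : Finset (Fin d))) (f := w)
    simpa [Finset.card_univ] using h
  have stepC : ∀ k ∈ Finset.Icc K N, cc N * ((3/4) * L^2 / d) ≤ cc k * Q k := by
    intro k hk
    obtain ⟨hk1, hk2⟩ := Finset.mem_Icc.1 hk
    have hβ0 : (0:ℝ) ≤ (1/2:ℝ)^(2*k+1) := by positivity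
    have hSw : (0:ℝ) ≤ ∑ i, (w i)^2 := Finset.sum_nonneg fun i _ => sq_nonneg _
    have h3' : (d:ℝ)^2 * (1/2:ℝ)^(2*k+1) ≤ 1/2 := by
      have e1 : (1/2:ℝ)^(2*k+1) = (1/4:ℝ)^k * (1/2) := by
        rw [pow_succ, pow_mul]; norm_num
      have e2 : (1/4:ℝ)^k ≤ (1/4:ℝ)^K :=
        pow_le_pow_of_le_one (by norm_num) (by norm_num) hk1
      have e3 : (4:ℝ)^K * (1/4:ℝ)^K = 1 := by
        rw [← mul_pow]; norm_num
      calc (d:ℝ)^2 * (1/2:ℝ)^(2*k+1) = (d:ℝ)^2 * (1/4:ℝ)^k * (1/2) := by rw [e1]; ring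
        _ ≤ (4:ℝ)^K * (1/4:ℝ)^K * (1/2) := by
            have : (d:ℝ)^2 * (1/4:ℝ)^k ≤ (4:ℝ)^K * (1/4:ℝ)^K :=
              mul_le_mul hdsq e2 (by positivity) (by positivity)
            linarith
        _ = 1/2 := by rw [e3]; ring
    have h1 : (∑ i, (w i)^2) - (1/2:ℝ)^(2*k+1) * L^2 ≤ Q k := by
      rw [hQ, hL]
      exact Qk_lower hA hdiag hlow hw k
    have hDβ : (d:ℝ) * (1/2:ℝ)^(2*k+1) ≤ 1/4 := by
      nlinarith [h3', hβ0, hdR, mul_nonneg hdR0.le hβ0]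
    have hQk : (3/4) * L^2 / (d:ℝ) ≤ Q k := by
      rw [div_le_iff₀ hdR0]
      have t1 := mul_le_mul_of_nonneg_right h1 hdR0.le
      have t2 := mul_le_mul_of_nonneg_right hDβ (sq_nonneg L)
      nlinarith [t1, t2, hsum_sq]
    have hcck : cc N ≤ cc k := by
      rw [hcc]
      apply div_le_div₀ (bb_pos k).le (bb_anti' hk2) (by positivity)
      have : (k:ℝ) ≤ (N:ℝ) := by exact_mod_cast hk2
      linarith
    exact mul_le_mul hcck hQk (by positivity) (hccpos k).le
  -- step D : sum the constant lower bound
  have cardIcc : (Finset.Icc K N).card = K + 1 := by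
    rw [Nat.card_Icc]; omega
  have stepD : ((K:ℝ)+1) * (cc N * ((3/4) * L^2 / d))
      ≤ ∑ k ∈ Finset.Icc K N, cc k * Q k := by
    calc ((K:ℝ)+1) * (cc N * ((3/4) * L^2 / d))
        = ∑ _k ∈ Finset.Icc K N, cc N * ((3/4) * L^2 / d) := by
          rw [Finset.sum_const, cardIcc, nsmul_eq_mul]; push_cast; ring
      _ ≤ _ := Finset.sum_le_sum stepC
  -- step E : lower bound the constant
  have hNge1 : 1 ≤ N := by omega
  have hbbN := bb_sqrt_lower hNge1
  have hsqN : Real.sqrt (N:ℝ) ≤ (3/2) * Real.sqrt K := by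
    have h1 : (N:ℝ) ≤ ((3/2) * Real.sqrt K)^2 := by
      rw [mul_pow, hsKsq]
      have : (N:ℝ) = 2 * K := by rw [hN]; push_cast; ring
      nlinarith
    calc Real.sqrt (N:ℝ) ≤ Real.sqrt (((3/2) * Real.sqrt K)^2) := Real.sqrt_le_sqrt h1
      _ = (3/2) * Real.sqrt K := Real.sqrt_sq (by positivity)
  have hsN0 : (0:ℝ) < Real.sqrt N := Real.sqrt_pos.2 (by exact_mod_cast hNge1)
  have hbbN2 : 1 / (3 * Real.sqrt K) ≤ bb N := by
    refine le_trans ?_ hbbN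
    apply one_div_le_one_div_of_le (by positivity)
    linarith
  have hB3 : 1 ≤ 3 * Real.sqrt K * bb N := by
    have := (div_le_iff₀ (by positivity : (0:ℝ) < 3 * Real.sqrt K)).mp hbbN2
    linarith [this]
  have stepE : L^2 / (16 * ((d:ℝ) * Real.sqrt K))
      ≤ ((K:ℝ)+1) * (cc N * ((3/4) * L^2 / d)) := by
    have hRHSeq : ((K:ℝ)+1) * (cc N * ((3/4) * L^2 / d))
        = (((K:ℝ)+1) * bb N * (3 * L^2)) / (4 * (2*(N:ℝ)+1) * d) := by
      rw [hcc]
      have hNpos : (0:ℝ) < 2*(N:ℝ)+1 := by positivity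
      field_simp
    rw [hRHSeq, div_le_div_iff₀ (by positivity) (by positivity)]
    have hNK : (N:ℝ) = 2 * (K:ℝ) := by rw [hN]; push_cast; ring
    rw [hNK]
    have hbbNpos := bb_pos N
    have husq : (0:ℝ) ≤ L^2 := sq_nonneg L
    have hmain : 16 * L^2 * (d:ℝ) * ((K:ℝ)+1)
        ≤ 16 * L^2 * (d:ℝ) * ((K:ℝ)+1) * (3 * Real.sqrt K * bb N) := by
      refine le_mul_of_one_le_right (by positivity) hB3
    nlinarith [hmain, mul_nonneg (mul_nonneg husq hdR0.le) hsK.le,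
      mul_nonneg husq hdR0.le]
  -- put everything together
  have hεL : ε * L^2 ≤ L^2 / (32 * ((d:ℝ) * Real.sqrt K)) := by
    have := mul_le_mul_of_nonneg_right hεb (sq_nonneg L)
    calc ε * L^2 ≤ (1 / (32 * ((d:ℝ) * Real.sqrt K))) * L^2 := this
      _ = L^2 / (32 * ((d:ℝ) * Real.sqrt K)) := by ring
  have hT : L^2 / (32 * ((d:ℝ) * Real.sqrt K))
      ≤ ∑ i, ∑ j, w i * w j * Real.arcsin (A i j) := by
    have c1 : L^2 / (16 * ((d:ℝ) * Real.sqrt K)) - ε * L^2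
        ≤ ∑ i, ∑ j, w i * w j * Real.arcsin (A i j) := by
      have := le_trans stepD (le_trans stepB (le_of_eq stepA3))
      linarith [stepA, stepE, this]
    have hXne : (d:ℝ) * Real.sqrt K ≠ 0 := by positivity
    have c2 : L^2 / (16 * ((d:ℝ) * Real.sqrt K)) - L^2 / (32 * ((d:ℝ) * Real.sqrt K))
        = L^2 / (32 * ((d:ℝ) * Real.sqrt K)) := by
      field_simp
      ring
    linarith [c1, c2, hεL]
  -- final comparison with √(log d)
  rw [ge_iff_le, habs]
  calc (1:ℝ)/64 * L^2 / ((d:ℝ) * Real.sqrt (Real.log d))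
      ≤ L^2 / (32 * ((d:ℝ) * Real.sqrt K)) := by
        rw [div_le_div_iff₀ (by positivity) (by positivity)]
        nlinarith [mul_nonneg (mul_nonneg (sq_nonneg L) hdR0.le) hsK.le,
          mul_le_mul_of_nonneg_left hsK4
            (mul_nonneg (sq_nonneg L) hdR0.le)]
    _ ≤ _ := hT
end
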